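/- Under Assumptions of Lipschitz gradients and strong convexity of the global cost, consider the average error dynamics ξ_m⁺ = ξ_m − (γ/N)𝟙ᵀ(Φ(x) − Φ(𝟙θ*)) + w_m with x = 𝟙(ξ_m + θ*) + S ξ_⊥. Then there exist constants c₀, c₂, γ₀* > 0 and a function c₆(γ) such that for all γ ∈ (0, γ₀*], the function V₁(ξ_m) = ξ_m² satisfies the ISS dissipation inequality V₁(ξ_m⁺) − V₁(ξ_m) ≤ −2c₀γ ξ_m² + (c₇γ + c₅γ²)|ξ_⊥|² + c₆(γ) w_m² for suitable positive constants c₅, c₇. -/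

import Mathlib

open Matrix

set_option maxHeartbeats 1000000 in
lemma key_arith (n m L γ A u e W Psq : ℝ) (hn : 1 ≤ n) (hm : 0 < m) (hL : 0 < L)
    (hγ : 0 < γ) (hγ1 : γ * (8 * n * L ^ 2) ≤ m) (hγ2 : 2 * L * γ ≤ 1)
    (hγ3 : γ * m ≤ 2 * n ^ 2)
    (h1 : m * A ^ 2 ≤ A * u) (h2 : u ^ 2 ≤ n ^ 2 * L ^ 2 * A ^ 2)
    (h3 : e ^ 2 ≤ n * L ^ 2 * Psq) (hP : 0 ≤ Psq) :
    (A - (γ / n) * (u + e) + W) ^ 2 - A ^ 2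
      ≤ -2 * (3 * m / (16 * n)) * γ * A ^ 2
        + ((L ^ 2 / m) * γ + (2 * L ^ 2 / n + L ^ 2) * γ ^ 2) * Psq
        + (1 + 8 * n / (γ * m)) * W ^ 2 := by
  have hn0 : 0 < n := lt_of_lt_of_le one_pos hn
  obtain ⟨a, ha⟩ : ∃ a : ℝ, a = A - (γ / n) * (u + e) := ⟨_, rfl⟩
  obtain ⟨ε, hε⟩ : ∃ ε : ℝ, ε = γ * m / (8 * n) := ⟨_, rfl⟩
  have hεpos : 0 < ε := by rw [hε]; positivity
  have hue : (u + e) ^ 2 ≤ 2 * n ^ 2 * L ^ 2 * A ^ 2 + 2 * n * L ^ 2 * Psq := by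
    nlinarith [sq_nonneg (u - e)]
  have hT3 : (γ / n) ^ 2 * (u + e) ^ 2 ≤ 2 * γ ^ 2 * L ^ 2 * A ^ 2 + (2 * γ ^ 2 * L ^ 2 / n) * Psq := by
    have h4 : (γ / n) ^ 2 * (u + e) ^ 2 ≤ (γ / n) ^ 2 * (2 * n ^ 2 * L ^ 2 * A ^ 2 + 2 * n * L ^ 2 * Psq) :=
      mul_le_mul_of_nonneg_left hue (by positivity)
    have hid : (γ / n) ^ 2 * (2 * n ^ 2 * L ^ 2 * A ^ 2 + 2 * n * L ^ 2 * Psq)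
        = 2 * γ ^ 2 * L ^ 2 * A ^ 2 + (2 * γ ^ 2 * L ^ 2 / n) * Psq := by
      field_simp
    linarith
  have haa : a ^ 2 = A ^ 2 - 2 * A * ((γ / n) * (u + e)) + (γ / n) ^ 2 * (u + e) ^ 2 := by
    rw [ha]; ring
  have hA2 : a ^ 2 ≤ (2 + 4 * γ ^ 2 * L ^ 2) * A ^ 2 + (4 * γ ^ 2 * L ^ 2 / n) * Psq := by
    have hs := sq_nonneg (A + (γ / n) * (u + e))
    simp only [div_eq_mul_inv] at hT3 haa hs ⊢
    linarith
  have hcross : 2 * a * W ≤ ε * a ^ 2 + (1 / ε) * W ^ 2 := by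
    have hkey : ε * a ^ 2 - 2 * a * W + (1 / ε) * W ^ 2 = (1 / ε) * (ε * a - W) ^ 2 := by
      field_simp; ring
    have hnn : 0 ≤ (1 / ε) * (ε * a - W) ^ 2 := by positivity
    linarith
  have hT1 : -2 * (γ / n) * (A * u) ≤ -2 * (γ / n) * (m * A ^ 2) := by
    have h := mul_le_mul_of_nonneg_left h1 (le_of_lt (by positivity : (0:ℝ) < 2 * (γ / n)))
    simp only [div_eq_mul_inv] at h ⊢
    nlinarith [h]
  have hT2 : -2 * (γ / n) * (A * e) ≤ (γ * m / n) * A ^ 2 + (γ * L ^ 2 / m) * Psq := by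
    have he2 : (γ / (n * m)) * e ^ 2 ≤ (γ / (n * m)) * (n * L ^ 2 * Psq) :=
      mul_le_mul_of_nonneg_left h3 (by positivity)
    have hid : (γ / (n * m)) * (n * L ^ 2 * Psq) = (γ * L ^ 2 / m) * Psq := by
      field_simp
    have hsq : 0 ≤ (γ / n) * (1 / m) * (m * A + e) ^ 2 := by positivity
    have hexp : (γ / n) * (1 / m) * (m * A + e) ^ 2
        = (γ * m / n) * A ^ 2 + 2 * (γ / n) * (A * e) + (γ / (n * m)) * e ^ 2 := by
      field_simp; ring
    simp only [div_eq_mul_inv] at he2 hid hsq hexp ⊢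
    linarith
  have h42 : 4 * γ ^ 2 * L ^ 2 ≤ 1 := by
    have h := mul_le_mul_of_nonneg_left hγ2
      (mul_nonneg (mul_nonneg (by norm_num : (0:ℝ) ≤ 2) hL.le) hγ.le)
    nlinarith [h]
  have hT4 : ε * a ^ 2 ≤ (3 * γ * m / (8 * n)) * A ^ 2 + γ ^ 2 * L ^ 2 * Psq := by
    have h4 : ε * a ^ 2 ≤ ε * ((2 + 4 * γ ^ 2 * L ^ 2) * A ^ 2 + (4 * γ ^ 2 * L ^ 2 / n) * Psq) :=
      mul_le_mul_of_nonneg_left hA2 (le_of_lt hεpos)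
    have hb1 : ε * ((2 + 4 * γ ^ 2 * L ^ 2) * A ^ 2) ≤ (3 * γ * m / (8 * n)) * A ^ 2 := by
      have hc : ε * (2 + 4 * γ ^ 2 * L ^ 2) ≤ 3 * γ * m / (8 * n) := by
        have h3e : ε * 3 = 3 * γ * m / (8 * n) := by rw [hε]; ring
        nlinarith
      calc ε * ((2 + 4 * γ ^ 2 * L ^ 2) * A ^ 2) = (ε * (2 + 4 * γ ^ 2 * L ^ 2)) * A ^ 2 := by ring
        _ ≤ (3 * γ * m / (8 * n)) * A ^ 2 := mul_le_mul_of_nonneg_right hc (sq_nonneg A)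
    have hb2 : ε * ((4 * γ ^ 2 * L ^ 2 / n) * Psq) ≤ γ ^ 2 * L ^ 2 * Psq := by
      have hcoef : ε * (4 * γ ^ 2 * L ^ 2 / n) ≤ γ ^ 2 * L ^ 2 := by
        have hfrac : γ * m / (2 * n ^ 2) ≤ 1 := by
          rw [div_le_one (by positivity)]; linarith
        calc ε * (4 * γ ^ 2 * L ^ 2 / n) = γ ^ 2 * L ^ 2 * (γ * m / (2 * n ^ 2)) := by
              rw [hε]; field_simp; try ring
          _ ≤ γ ^ 2 * L ^ 2 * 1 := mul_le_mul_of_nonneg_left hfrac (by positivity)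
          _ = γ ^ 2 * L ^ 2 := mul_one _
      calc ε * ((4 * γ ^ 2 * L ^ 2 / n) * Psq) = (ε * (4 * γ ^ 2 * L ^ 2 / n)) * Psq := by ring
        _ ≤ γ ^ 2 * L ^ 2 * Psq := mul_le_mul_of_nonneg_right hcoef hP
    linarith
  have hWcoef : (1 / ε) = 8 * n / (γ * m) := by rw [hε]; field_simp; try ring
  have hid2 : (A - (γ / n) * (u + e) + W) ^ 2 - A ^ 2
      = (-2 * (γ / n) * (A * u) + -2 * (γ / n) * (A * e) + (γ / n) ^ 2 * (u + e) ^ 2)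
        + 2 * a * W + W ^ 2 := by
    rw [ha]; ring
  have hγm : 2 * γ ^ 2 * L ^ 2 * A ^ 2 ≤ (γ * m / (4 * n)) * A ^ 2 := by
    have hc : 2 * γ ^ 2 * L ^ 2 ≤ γ * m / (4 * n) := by
      rw [le_div_iff₀ (by positivity)]
      nlinarith
    exact mul_le_mul_of_nonneg_right hc (sq_nonneg A)
  have hmain : -2 * (γ / n) * (m * A ^ 2) + (γ * m / n) * A ^ 2 + (γ * m / (4 * n)) * A ^ 2
      + (3 * γ * m / (8 * n)) * A ^ 2 = -2 * (3 * m / (16 * n)) * γ * A ^ 2 := by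
    field_simp; ring
  have hre : -2 * (3 * m / (16 * n)) * γ * A ^ 2
        + ((L ^ 2 / m) * γ + (2 * L ^ 2 / n + L ^ 2) * γ ^ 2) * Psq
        + (1 + 8 * n / (γ * m)) * W ^ 2
      = -2 * (3 * m / (16 * n)) * γ * A ^ 2
        + ((γ * L ^ 2 / m) + (2 * γ ^ 2 * L ^ 2 / n) + γ ^ 2 * L ^ 2) * Psq
        + (1 + 1 / ε) * W ^ 2 := by
    rw [hWcoef]; ring
  rw [hid2, hre]
  simp only [div_eq_mul_inv] at hT1 hT2 hT3 hcross hT4 hγm hmain ⊢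
  linarith

lemma strong_mono {m : ℝ} (F : ℝ → ℝ) (hd : Differentiable ℝ F)
    (hconv : StrongConvexOn Set.univ m F) :
    ∀ x y : ℝ, m * (x - y) ^ 2 ≤ (deriv F x - deriv F y) * (x - y) := by
  have hc : ConvexOn ℝ Set.univ fun x : ℝ => F x - m / 2 * ‖x‖ ^ 2 :=
    strongConvexOn_iff_convex.mp hconv
  have hc' : ConvexOn ℝ Set.univ fun x : ℝ => F x - m / 2 * x ^ 2 := by
    simpa [Real.norm_eq_abs, sq_abs] using hc
  have hdh : ∀ x : ℝ, DifferentiableAt ℝ (fun x : ℝ => F x - m / 2 * x ^ 2) x := fun x =>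
    (hd x).sub (by fun_prop)
  have hmono : MonotoneOn (deriv fun x : ℝ => F x - m / 2 * x ^ 2) Set.univ :=
    hc'.monotoneOn_deriv (fun x _ => hdh x)
  have hder : ∀ x : ℝ, deriv (fun x : ℝ => F x - m / 2 * x ^ 2) x = deriv F x - m * x := by
    intro x
    rw [deriv_fun_sub (hd x) (by fun_prop)]
    have : deriv (fun x : ℝ => m / 2 * x ^ 2) x = m / 2 * (2 * x) := by
      rw [deriv_const_mul _ (by fun_prop)]
      simp [deriv_pow]
    rw [this]; ring
  intro x y
  rcases le_total y x with h | h
  · have h2 := hmono (Set.mem_univ y) (Set.mem_univ x) h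
    rw [hder, hder] at h2
    nlinarith
  · have h2 := hmono (Set.mem_univ x) (Set.mem_univ y) h
    rw [hder, hder] at h2
    nlinarith

theorem wang_elia_average_subsystem_ISS
    (N : ℕ) (hN : 1 ≤ N)
    (f : Fin N → ℝ → ℝ)
    (hf : ∀ i, ContDiff ℝ 1 (f i))
    (ℓ : NNReal) (hℓ : 0 < ℓ)
    (hlip : ∀ i, LipschitzWith ℓ (deriv (f i)))
    (m : ℝ) (hm : 0 < m)
    (hconv : StrongConvexOn Set.univ m (fun θ => ∑ i, f i θ))
    (θstar : ℝ)
    (hcrit : ∑ i, deriv (f i) θstar = 0)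
    (S : Matrix (Fin N) (Fin (N - 1)) ℝ)
    (hS1 : Sᵀ *ᵥ (fun _ => (1 : ℝ)) = 0)
    (hS2 : Sᵀ * S = 1) :
    ∃ c₀ c₂ c₅ c₇ γ₀ : ℝ, ∃ c₆ : ℝ → ℝ,
      0 < c₀ ∧ 0 < c₂ ∧ 0 < c₅ ∧ 0 < c₇ ∧ 0 < γ₀ ∧
      (∀ γ ∈ Set.Ioc (0 : ℝ) γ₀, 0 < c₆ γ) ∧
      ∀ γ ∈ Set.Ioc (0 : ℝ) γ₀, ∀ (ξm : ℝ) (ξp : Fin (N - 1) → ℝ) (wm : ℝ),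
        (ξm - (γ / N) *
            (∑ i, (deriv (f i) ((ξm + θstar) + (S *ᵥ ξp) i)
                    - deriv (f i) θstar)) + wm) ^ 2
          - ξm ^ 2
        ≤ -2 * c₀ * γ * ξm ^ 2 + (c₇ * γ + c₅ * γ ^ 2) * (∑ j, (ξp j) ^ 2)
            + c₆ γ * wm ^ 2 := by
  set n : ℝ := (N : ℝ) with hn_def
  have hn : 1 ≤ n := Nat.one_le_cast.mpr hN
  have hn0 : 0 < n := lt_of_lt_of_le one_pos hn
  set L : ℝ := (ℓ : ℝ) with hL_def
  have hL : 0 < L := hℓ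
  refine ⟨3 * m / (16 * n), 1, 2 * L ^ 2 / n + L ^ 2, L ^ 2 / m,
    min (m / (8 * n * L ^ 2)) (min (1 / (2 * L)) (2 * n ^ 2 / m)),
    fun γ => 1 + 8 * n / (γ * m), by positivity, one_pos, by positivity, by positivity,
    ?_, ?_, ?_⟩
  · positivity
  · intro γ hγ
    have hγ0 : 0 < γ := hγ.1
    positivity
  intro γ hγ ξm ξp wm
  obtain ⟨hγ0, hγle⟩ := hγ
  have hγ1 : γ * (8 * n * L ^ 2) ≤ m := by
    have h := le_trans hγle (min_le_left _ _)
    rw [le_div_iff₀ (by positivity)] at h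
    linarith
  have hγ2 : 2 * L * γ ≤ 1 := by
    have h := le_trans hγle (le_trans (min_le_right _ _) (min_le_left _ _))
    rw [le_div_iff₀ (by positivity)] at h
    linarith
  have hγ3 : γ * m ≤ 2 * n ^ 2 := by
    have h := le_trans hγle (le_trans (min_le_right _ _) (min_le_right _ _))
    rw [le_div_iff₀ hm] at h
    linarith
  -- abbreviations
  set s : Fin N → ℝ := S *ᵥ ξp with hs_def
  set u : ℝ := ∑ i, (deriv (f i) (ξm + θstar) - deriv (f i) θstar) with hu_def
  set e : ℝ := ∑ i, (deriv (f i) ((ξm + θstar) + s i) - deriv (f i) (ξm + θstar)) with he_def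
  set Psq : ℝ := ∑ j, (ξp j) ^ 2 with hPsq_def
  have hP : 0 ≤ Psq := Finset.sum_nonneg fun j _ => sq_nonneg _
  -- sum decomposition
  have hGe : (∑ i, (deriv (f i) ((ξm + θstar) + s i) - deriv (f i) θstar)) = u + e := by
    rw [hu_def, he_def, ← Finset.sum_add_distrib]
    exact Finset.sum_congr rfl fun i _ => by ring
  -- differentiability
  have hdfi : ∀ i, Differentiable ℝ (f i) := fun i => (hf i).differentiable one_ne_zero
  have hdF : Differentiable ℝ (fun θ => ∑ i, f i θ) := fun x =>
    DifferentiableAt.fun_sum (fun i _ => hdfi i x)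
  have hderivF : ∀ x : ℝ, deriv (fun θ => ∑ i, f i θ) x = ∑ i, deriv (f i) x := fun x =>
    deriv_fun_sum (fun i _ => hdfi i x)
  -- strong convexity bound h1
  have h1 : m * ξm ^ 2 ≤ ξm * u := by
    have h := strong_mono _ hdF hconv (ξm + θstar) θstar
    rw [hderivF, hderivF, hcrit] at h
    have hu : u = (∑ i, deriv (f i) (ξm + θstar)) - 0 := by
      rw [hu_def, Finset.sum_sub_distrib, hcrit]
    rw [← hu] at h
    simpa [add_sub_cancel_right, mul_comm] using h
  -- Lipschitz pointwise
  have hLip : ∀ i (a b : ℝ), |deriv (f i) a - deriv (f i) b| ≤ L * |a - b| := by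
    intro i a b
    have h := (hlip i).dist_le_mul a b
    rwa [Real.dist_eq, Real.dist_eq] at h
  -- h2
  have habs : |u| ≤ n * (L * |ξm|) := by
    calc |u| ≤ ∑ i, |deriv (f i) (ξm + θstar) - deriv (f i) θstar| :=
          Finset.abs_sum_le_sum_abs _ _
      _ ≤ ∑ _i : Fin N, L * |ξm| := Finset.sum_le_sum fun i _ => by
          simpa [add_sub_cancel_right] using hLip i (ξm + θstar) θstar
      _ = n * (L * |ξm|) := by
          rw [Finset.sum_const, Finset.card_univ, Fintype.card_fin, nsmul_eq_mul]
  have h2 : u ^ 2 ≤ n ^ 2 * L ^ 2 * ξm ^ 2 := by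
    calc u ^ 2 = |u| ^ 2 := (sq_abs u).symm
      _ ≤ (n * (L * |ξm|)) ^ 2 := pow_le_pow_left₀ (abs_nonneg u) habs 2
      _ = n ^ 2 * L ^ 2 * ξm ^ 2 := by rw [mul_pow, mul_pow, sq_abs]; ring
  -- h3
  have hse : |e| ≤ L * ∑ i, |s i| := by
    calc |e| ≤ ∑ i, |deriv (f i) ((ξm + θstar) + s i) - deriv (f i) (ξm + θstar)| :=
          Finset.abs_sum_le_sum_abs _ _
      _ ≤ ∑ i, L * |s i| := Finset.sum_le_sum fun i _ => by
          simpa [add_sub_cancel_left] using hLip i ((ξm + θstar) + s i) (ξm + θstar)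
      _ = L * ∑ i, |s i| := by rw [Finset.mul_sum]
  have hcs : (∑ i, |s i|) ^ 2 ≤ n * ∑ i, (s i) ^ 2 := by
    have h := sq_sum_le_card_mul_sum_sq (s := (Finset.univ : Finset (Fin N)))
      (f := fun i => |s i|)
    simpa [sq_abs, Finset.card_univ, Fintype.card_fin] using h
  have hsp : (∑ i, (s i) ^ 2) = Psq := by
    rw [hPsq_def]
    have h : s ⬝ᵥ s = ξp ⬝ᵥ ξp := by
      rw [hs_def, Matrix.dotProduct_mulVec, ← Matrix.mulVec_transpose,
        Matrix.mulVec_mulVec, hS2, Matrix.one_mulVec]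
    simpa [dotProduct, pow_two] using h
  have h3 : e ^ 2 ≤ n * L ^ 2 * Psq := by
    have ha : e ^ 2 ≤ (L * ∑ i, |s i|) ^ 2 := by
      calc e ^ 2 = |e| ^ 2 := (sq_abs e).symm
        _ ≤ (L * ∑ i, |s i|) ^ 2 := pow_le_pow_left₀ (abs_nonneg e) hse 2
    have hb : L ^ 2 * (∑ i, |s i|) ^ 2 ≤ L ^ 2 * (n * ∑ i, (s i) ^ 2) :=
      mul_le_mul_of_nonneg_left hcs (sq_nonneg L)
    rw [hsp] at hb
    nlinarith
  -- apply key lemma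
  have hkey := key_arith n m L γ ξm u e wm Psq hn hm hL hγ0 hγ1 hγ2 hγ3 h1 h2 h3 hP
  rw [hGe]
  exact hkey
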